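/- Let Ξ be a compact metric space, g: Ξ → Ξ continuous, and A ⊆ Ξ a closed set with μ(A) < ν for every g-invariant Borel probability measure μ. Then for every ξ ∈ Ξ: limsup_{n→∞} (1/n)·#{0 ≤ k < n : g^k(ξ) ∈ A} < ν. -/

import Mathlib

open MeasureTheory Filter

open MeasureTheory Filter Set TopologicalSpace BoundedContinuousFunction
open scoped NNReal ENNReal Topology

set_option linter.unusedSectionVars false

namespace VFLaux

variable {Ξ : Type*} [MetricSpace Ξ] [CompactSpace Ξ]

/-- Birkhoff average of `f` along the orbit of `ξ`. -/
noncomputable def birk (g : Ξ → Ξ) (ξ : Ξ) (f : Ξ →ᵇ ℝ≥0) (n : ℕ) : ℝ≥0 :=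
  (∑ k ∈ Finset.range n, f (g^[k] ξ)) / (n : ℝ≥0)

/-- Limit of Birkhoff averages along an ultrafilter, in `ℝ≥0∞`. -/
noncomputable def lam0 (g : Ξ → Ξ) (ξ : Ξ) (𝒰 : Ultrafilter ℕ) (f : Ξ →ᵇ ℝ≥0) : ℝ≥0∞ :=
  (𝒰.map (fun n => ((birk g ξ f n : ℝ≥0) : ℝ≥0∞))).lim

lemma exists_bound (ξ : Ξ) (f : Ξ →ᵇ ℝ≥0) : ∃ M : ℝ≥0, ∀ x, f x ≤ M := by
  have : Nonempty Ξ := ⟨ξ⟩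
  obtain ⟨x₀, -, hx₀⟩ := isCompact_univ.exists_isMaxOn univ_nonempty
    f.continuous.continuousOn
  exact ⟨f x₀, fun x => hx₀ (mem_univ x)⟩

variable (g : Ξ → Ξ) (ξ : Ξ) (𝒰 : Ultrafilter ℕ)

lemma tendsto_lam0 (f : Ξ →ᵇ ℝ≥0) :
    Tendsto (fun n => ((birk g ξ f n : ℝ≥0) : ℝ≥0∞)) 𝒰 (𝓝 (lam0 g ξ 𝒰 f)) :=
  Ultrafilter.le_nhds_lim _

lemma birk_le {f : Ξ →ᵇ ℝ≥0} {M : ℝ≥0} (hM : ∀ x, f x ≤ M) (n : ℕ) : birk g ξ f n ≤ M := by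
  rcases Nat.eq_zero_or_pos n with rfl | hn
  · simp [birk]
  · rw [birk, div_le_iff₀ (by exact_mod_cast hn : (0:ℝ≥0) < n)]
    calc ∑ k ∈ Finset.range n, f (g^[k] ξ) ≤ ∑ _k ∈ Finset.range n, M :=
          Finset.sum_le_sum fun k _ => hM _
      _ = M * n := by simp [Finset.sum_const, mul_comm]

lemma lam0_ne_top (f : Ξ →ᵇ ℝ≥0) : lam0 g ξ 𝒰 f ≠ ∞ := by
  obtain ⟨M, hM⟩ := exists_bound ξ f
  refine ne_top_of_le_ne_top (ENNReal.coe_ne_top (r := M)) ?_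
  exact le_of_tendsto' (tendsto_lam0 g ξ 𝒰 f)
    (fun n => ENNReal.coe_le_coe.2 (birk_le g ξ hM n))

lemma lam0_add (f h : Ξ →ᵇ ℝ≥0) :
    lam0 g ξ 𝒰 (f + h) = lam0 g ξ 𝒰 f + lam0 g ξ 𝒰 h := by
  have hb : ∀ n, birk g ξ (f + h) n = birk g ξ f n + birk g ξ h n := by
    intro n
    simp only [birk, BoundedContinuousFunction.coe_add, Pi.add_apply, Finset.sum_add_distrib,
      add_div]
  refine tendsto_nhds_unique (tendsto_lam0 g ξ 𝒰 (f + h)) ?_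
  have := (tendsto_lam0 g ξ 𝒰 f).add (tendsto_lam0 g ξ 𝒰 h)
  refine this.congr fun n => ?_
  rw [hb n, ENNReal.coe_add]

lemma lam0_smul (c : ℝ≥0) (f : Ξ →ᵇ ℝ≥0) :
    lam0 g ξ 𝒰 (c • f) = (c : ℝ≥0∞) * lam0 g ξ 𝒰 f := by
  have hb : ∀ n, birk g ξ (c • f) n = c * birk g ξ f n := by
    intro n
    simp only [birk, BoundedContinuousFunction.coe_smul, Pi.smul_apply, smul_eq_mul,
      ← Finset.mul_sum, mul_div_assoc]
  refine tendsto_nhds_unique (tendsto_lam0 g ξ 𝒰 (c • f)) ?_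
  have horc : lam0 g ξ 𝒰 f ≠ 0 ∨ (c : ℝ≥0∞) ≠ ⊤ := Or.inr ENNReal.coe_ne_top
  have := ENNReal.Tendsto.const_mul (tendsto_lam0 g ξ 𝒰 f) horc
  refine this.congr fun n => ?_
  rw [hb n, ENNReal.coe_mul]


set_option maxHeartbeats 1000000 in
lemma lam0_comp (hg : Continuous g) (h𝒰 : (𝒰 : Filter ℕ) ≤ atTop) (f : Ξ →ᵇ ℝ≥0) :
    lam0 g ξ 𝒰 (f.compContinuous ⟨g, hg⟩) = lam0 g ξ 𝒰 f := by
  obtain ⟨M, hM⟩ := exists_bound ξ f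
  set F : Ξ →ᵇ ℝ≥0 := f.compContinuous ⟨g, hg⟩ with hF
  have hsum : ∀ n, birk g ξ F n + f ξ / (n : ℝ≥0)
      = birk g ξ f n + f (g^[n] ξ) / (n : ℝ≥0) := by
    intro n
    have key : (∑ k ∈ Finset.range n, F (g^[k] ξ)) + f ξ
        = (∑ k ∈ Finset.range n, f (g^[k] ξ)) + f (g^[n] ξ) := by
      have h1 : ∀ k, F (g^[k] ξ) = f (g^[k+1] ξ) := by
        intro k
        simp [hF, compContinuous_apply, Function.iterate_succ_apply']
      calc (∑ k ∈ Finset.range n, F (g^[k] ξ)) + f ξ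
          = (∑ k ∈ Finset.range n, f (g^[k+1] ξ)) + f (g^[0] ξ) := by
            simp only [Function.iterate_zero_apply]
            exact congrArg (· + f ξ) (Finset.sum_congr rfl fun k _ => h1 k)
        _ = ∑ k ∈ Finset.range (n+1), f (g^[k] ξ) := (Finset.sum_range_succ' (fun k => f (g^[k] ξ)) n).symm
        _ = (∑ k ∈ Finset.range n, f (g^[k] ξ)) + f (g^[n] ξ) := Finset.sum_range_succ _ n
    simp only [birk, ← add_div, key]
  have htend0 : Tendsto (fun n : ℕ => ((f ξ / (n : ℝ≥0) : ℝ≥0) : ℝ≥0∞)) atTop (𝓝 0) := by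
    rw [← ENNReal.coe_zero, ENNReal.tendsto_coe, ← NNReal.tendsto_coe]
    simp only [NNReal.coe_div, NNReal.coe_natCast, NNReal.coe_zero]
    exact tendsto_const_div_atTop_nhds_zero_nat _
  have htendM : Tendsto (fun n : ℕ => ((M / (n : ℝ≥0) : ℝ≥0) : ℝ≥0∞)) atTop (𝓝 0) := by
    rw [← ENNReal.coe_zero, ENNReal.tendsto_coe, ← NNReal.tendsto_coe]
    simp only [NNReal.coe_div, NNReal.coe_natCast, NNReal.coe_zero]
    exact tendsto_const_div_atTop_nhds_zero_nat _
  have htend1 : Tendsto (fun n : ℕ => ((f (g^[n] ξ) / (n : ℝ≥0) : ℝ≥0) : ℝ≥0∞)) atTop (𝓝 0) := by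
    refine tendsto_of_tendsto_of_tendsto_of_le_of_le tendsto_const_nhds htendM
      (fun n => zero_le) (fun n => ?_)
    refine ENNReal.coe_le_coe.2 ?_
    rw [div_eq_mul_inv, div_eq_mul_inv]
    exact mul_le_mul_left (hM _) _
  have h₁ : Tendsto (fun n => ((birk g ξ F n + f ξ / (n : ℝ≥0) : ℝ≥0) : ℝ≥0∞)) 𝒰
      (𝓝 (lam0 g ξ 𝒰 F + 0)) := by
    refine ((tendsto_lam0 g ξ 𝒰 F).add (htend0.mono_left h𝒰)).congr fun n => ?_
    rw [ENNReal.coe_add]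
  have h₂ : Tendsto (fun n => ((birk g ξ F n + f ξ / (n : ℝ≥0) : ℝ≥0) : ℝ≥0∞)) 𝒰
      (𝓝 (lam0 g ξ 𝒰 f + 0)) := by
    refine ((tendsto_lam0 g ξ 𝒰 f).add (htend1.mono_left h𝒰)).congr fun n => ?_
    rw [← ENNReal.coe_add, hsum n]
  have := tendsto_nhds_unique h₁ h₂
  simpa using this

lemma lam0_one (h𝒰 : (𝒰 : Filter ℕ) ≤ atTop) : lam0 g ξ 𝒰 (1 : Ξ →ᵇ ℝ≥0) = 1 := by
  have hev : (fun n => ((birk g ξ (1 : Ξ →ᵇ ℝ≥0) n : ℝ≥0) : ℝ≥0∞)) =ᶠ[𝒰]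
      (fun _ => (1 : ℝ≥0∞)) := by
    filter_upwards [h𝒰 (eventually_ge_atTop 1)] with n hn
    have : birk g ξ (1 : Ξ →ᵇ ℝ≥0) n = 1 := by
      have : ((n : ℝ≥0)) ≠ 0 := by exact_mod_cast (Nat.one_le_iff_ne_zero.mp hn)
      simp [birk, div_self this]
    rw [this, ENNReal.coe_one]
  exact tendsto_nhds_unique (tendsto_lam0 g ξ 𝒰 1) (Tendsto.congr' hev.symm tendsto_const_nhds)


lemma one_le_lam0 (h𝒰 : (𝒰 : Filter ℕ) ≤ atTop) {f : Ξ →ᵇ ℝ≥0} (hf : ∀ x, 1 ≤ f x) :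
    1 ≤ lam0 g ξ 𝒰 f := by
  have hc : Continuous fun x => f x - 1 := f.continuous.sub continuous_const
  set d : Ξ →ᵇ ℝ≥0 := mkOfCompact ⟨fun x => f x - 1, hc⟩ with hd
  have hfd : f = 1 + d := by
    ext x
    have key : f x = (1 + d) x := by
      show f x = (1 : Ξ →ᵇ ℝ≥0) x + d x
      simp only [hd, BoundedContinuousFunction.coe_one, Pi.one_apply, mkOfCompact_apply,
      ContinuousMap.coe_mk]
      exact (add_tsub_cancel_of_le (hf x)).symm
    exact congrArg _ key
  rw [hfd, lam0_add, lam0_one g ξ 𝒰 h𝒰]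
  exact le_self_add

/-- Bounded continuous functions from compactly supported ones on a compact space. -/
noncomputable def toB : CompactlySupportedContinuousMap Ξ ℝ≥0 →ₗ[ℝ≥0] (Ξ →ᵇ ℝ≥0) where
  toFun f := mkOfCompact (f : C(Ξ, ℝ≥0))
  map_add' _ _ := rfl
  map_smul' _ _ := rfl

lemma riesz_sup_disjoint (Λ : (Ξ →ᵇ ℝ≥0) →ₗ[ℝ≥0] ℝ≥0) (K₁ K₂ : Compacts Ξ)
    (hd : Disjoint (K₁ : Set Ξ) (K₂ : Set Ξ)) :
    rieszContentAux (Λ ∘ₗ toB) (K₁ ⊔ K₂) = rieszContentAux (Λ ∘ₗ toB) K₁ + rieszContentAux (Λ ∘ₗ toB) K₂ := by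
  exact rieszContentAux_union _ hd

lemma riesz_top (Λ : (Ξ →ᵇ ℝ≥0) →ₗ[ℝ≥0] ℝ≥0)
    (hmono : ∀ f : Ξ →ᵇ ℝ≥0, (∀ x, 1 ≤ f x) → Λ 1 ≤ Λ f) :
    rieszContentAux (Λ ∘ₗ toB) (⊤ : Compacts Ξ) = Λ 1 := by
  refine le_antisymm ?_ ?_
  · exact csInf_le (OrderBot.bddBelow _)
      ⟨CompactlySupportedContinuousMap.continuousMapEquiv (1 : Ξ →ᵇ ℝ≥0).toContinuousMap,
        fun x _ => le_rfl, rfl⟩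
  · refine le_csInf (rieszContentAux_image_nonempty (Λ ∘ₗ toB) ⊤) ?_
    rintro b ⟨f, hf, rfl⟩
    exact hmono (toB f) fun x => hf x (mem_univ x)

end VFLaux

open VFLaux Set TopologicalSpace BoundedContinuousFunction
open scoped NNReal ENNReal Topology

set_option maxHeartbeats 1000000 in
/-- if `A` is a closed subset of a compact metric space with `μ(A) < ν`
for all `g`-invariant Borel probability measures `μ`, then the upper visit frequency of
every orbit to `A` is `< ν`. -/
theorem visit_frequency_lt {Ξ : Type*} [MetricSpace Ξ] [CompactSpace Ξ]
    [MeasurableSpace Ξ] [BorelSpace Ξ] (g : Ξ → Ξ) (hg : Continuous g)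
    (A : Set Ξ) (hA : IsClosed A) (ν : ℝ) (hν : 0 < ν)
    (hmeas : ∀ μ : Measure Ξ, IsProbabilityMeasure μ → MeasurePreserving g μ μ →
      μ A < ENNReal.ofReal ν) :
    ∀ ξ : Ξ, Filter.limsup
      (fun n : ℕ => (Set.ncard {k : ℕ | k < n ∧ g^[k] ξ ∈ A} : ℝ) / n)
      Filter.atTop < ν := by
  intro ξ
  by_contra hcon
  push_neg at hcon
  classical
  set F : ℕ → ℝ := fun n => (Set.ncard {k : ℕ | k < n ∧ g^[k] ξ ∈ A} : ℝ) / n with hFdef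
  have hF0 : ∀ n, 0 ≤ F n := fun n => div_nonneg (by positivity) (by positivity)
  have hfreq : ∀ ε : ℝ, 0 < ε → ∃ᶠ n in atTop, ν - ε < F n := by
    intro ε hε
    by_contra h
    have hev : ∀ᶠ n in atTop, F n ≤ ν - ε := by
      simpa only [not_frequently, not_lt] using h
    have hcb : IsCoboundedUnder (· ≤ ·) atTop F :=
      Filter.isCoboundedUnder_le_of_le atTop hF0
    have hls := Filter.limsup_le_of_le hcb hev
    have := hcon.trans hls
    linarith
  obtain ⟨φ, hφmono, hφ⟩ := Filter.extraction_forall_of_frequently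
    (P := fun j n => ν - 1/((j:ℝ)+1) < F n)
    (fun j => hfreq (1/((j:ℝ)+1)) (by positivity))
  set 𝒰 : Ultrafilter ℕ := Ultrafilter.of (Filter.map φ atTop) with h𝒰def
  have h𝒰φ : (𝒰 : Filter ℕ) ≤ Filter.map φ atTop := Ultrafilter.of_le _
  have h𝒰 : (𝒰 : Filter ℕ) ≤ atTop := h𝒰φ.trans hφmono.tendsto_atTop
  have hne : ∀ f : Ξ →ᵇ ℝ≥0, lam0 g ξ 𝒰 f ≠ ∞ := lam0_ne_top g ξ 𝒰
  set Λ : (Ξ →ᵇ ℝ≥0) →ₗ[ℝ≥0] ℝ≥0 :=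
    { toFun := fun f => (lam0 g ξ 𝒰 f).toNNReal
      map_add' := fun f h => by
        simp only [lam0_add g ξ 𝒰 f h, ENNReal.toNNReal_add (hne f) (hne h)]
      map_smul' := fun c f => by
        simp only [lam0_smul g ξ 𝒰 c f, ENNReal.toNNReal_mul, ENNReal.toNNReal_coe,
          RingHom.id_apply, smul_eq_mul] } with hΛdef
  have hΛcoe : ∀ f, ((Λ f : ℝ≥0) : ℝ≥0∞) = lam0 g ξ 𝒰 f := fun f =>
    ENNReal.coe_toNNReal (hne f)
  have hΛ1 : Λ (1 : Ξ →ᵇ ℝ≥0) = 1 := by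
    have h1 : lam0 g ξ 𝒰 (1 : Ξ →ᵇ ℝ≥0) = 1 := lam0_one g ξ 𝒰 h𝒰
    show (lam0 g ξ 𝒰 (1 : Ξ →ᵇ ℝ≥0)).toNNReal = 1
    rw [h1]; rfl
  have hmono1 : ∀ f : Ξ →ᵇ ℝ≥0, (∀ x, 1 ≤ f x) → Λ 1 ≤ Λ f := by
    intro f hf
    have h1 : lam0 g ξ 𝒰 (1 : Ξ →ᵇ ℝ≥0) ≤ lam0 g ξ 𝒰 f := by
      rw [lam0_one g ξ 𝒰 h𝒰]; exact one_le_lam0 g ξ 𝒰 h𝒰 hf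
    exact ENNReal.toNNReal_mono (hne f) h1
  have hΛcomp : ∀ f : Ξ →ᵇ ℝ≥0, Λ (f.compContinuous ⟨g, hg⟩) = Λ f := by
    intro f
    show (lam0 g ξ 𝒰 (f.compContinuous ⟨g, hg⟩)).toNNReal = (lam0 g ξ 𝒰 f).toNNReal
    rw [lam0_comp g ξ 𝒰 hg h𝒰 f]
  set C : Content Ξ :=
    { toFun := rieszContentAux (Λ ∘ₗ toB)
      mono' := fun _K₁ _K₂ h => rieszContentAux_mono (Λ ∘ₗ toB) h
      sup_disjoint' := fun K₁ K₂ hd _ _ => riesz_sup_disjoint Λ K₁ K₂ hd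
      sup_le' := rieszContentAux_sup_le (Λ ∘ₗ toB) } with hCdef
  set μ : Measure Ξ := C.measure with hμdef
  -- `μ` is a probability measure
  have hμuniv : μ Set.univ = 1 := by
    rw [hμdef, C.measure_apply MeasurableSet.univ]
    have h1 : C.outerMeasure (Set.univ : Set Ξ) = C.innerContent ⟨Set.univ, isOpen_univ⟩ :=
      C.outerMeasure_of_isOpen _ isOpen_univ
    have h2 : C.innerContent ⟨Set.univ, isOpen_univ⟩ = C ⊤ :=
      le_antisymm (C.innerContent_le _ ⊤ (subset_univ _))
        (C.le_innerContent ⊤ _ (subset_univ _))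
    rw [h1, h2]
    show ((rieszContentAux (Λ ∘ₗ toB) ⊤ : ℝ≥0) : ℝ≥0∞) = 1
    rw [riesz_top Λ hmono1, hΛ1, ENNReal.coe_one]
  have hprob : IsProbabilityMeasure μ := ⟨hμuniv⟩
  -- invariance
  have hCpre : ∀ K : Compacts Ξ,
      rieszContentAux (Λ ∘ₗ toB) ⟨g ⁻¹' K, (K.isCompact.isClosed.preimage hg).isCompact⟩
        ≤ rieszContentAux (Λ ∘ₗ toB) K := by
    intro K
    refine csInf_le_csInf (OrderBot.bddBelow _) (rieszContentAux_image_nonempty (Λ ∘ₗ toB) K) ?_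
    rintro b ⟨f, hf, rfl⟩
    refine ⟨CompactlySupportedContinuousMap.continuousMapEquiv
        ((toB f).compContinuous ⟨g, hg⟩).toContinuousMap, ?_, hΛcomp (toB f)⟩
    intro x hx
    exact hf (g x) hx
  have hOpre : ∀ U : Set Ξ, IsOpen U → C.outerMeasure (g ⁻¹' U) ≤ C.outerMeasure U := by
    intro U hU
    rw [C.outerMeasure_of_isOpen _ (hU.preimage hg)]
    simp only [Content.innerContent]
    refine iSup₂_le fun K hK => ?_
    have hLc : IsCompact (g '' (K : Set Ξ)) := K.isCompact.image hg
    set L : Compacts Ξ := ⟨g '' K, hLc⟩ with hLdef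
    have hLU : (L : Set Ξ) ⊆ U := Set.image_subset_iff.mpr hK
    have h1 : (C K : ℝ≥0∞) ≤ C ⟨g ⁻¹' L, (L.isCompact.isClosed.preimage hg).isCompact⟩ :=
      C.mono _ _ (Set.subset_preimage_image g K)
    have h2 : (C ⟨g ⁻¹' L, (L.isCompact.isClosed.preimage hg).isCompact⟩ : ℝ≥0∞) ≤ C L :=
      ENNReal.coe_le_coe.2 (hCpre L)
    calc (C K : ℝ≥0∞) ≤ C L := h1.trans h2
      _ ≤ C.innerContent ⟨U, hU⟩ := C.le_innerContent L ⟨U, hU⟩ hLU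
      _ = C.outerMeasure U := (C.outerMeasure_of_isOpen U hU).symm
  have hBpre : ∀ B : Set Ξ, C.outerMeasure (g ⁻¹' B) ≤ C.outerMeasure B := by
    intro B
    rw [C.outerMeasure_eq_iInf B]
    refine le_iInf fun U => le_iInf fun hU => le_iInf fun hBU => ?_
    calc C.outerMeasure (g ⁻¹' B) ≤ C.outerMeasure (g ⁻¹' U) :=
          C.outerMeasure.mono (Set.preimage_mono hBU)
      _ ≤ C.outerMeasure U := hOpre U hU
      _ = C.innerContent ⟨U, hU⟩ := C.outerMeasure_of_isOpen U hU
  have hμle : ∀ B : Set Ξ, MeasurableSet B → μ (g ⁻¹' B) ≤ μ B := by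
    intro B hB
    rw [hμdef, C.measure_apply (hg.measurable hB), C.measure_apply hB]
    exact hBpre B
  have hμpres : MeasurePreserving g μ μ := by
    refine ⟨hg.measurable, ?_⟩
    refine Measure.ext fun B hB => ?_
    rw [Measure.map_apply hg.measurable hB]
    by_contra hne'
    have hlt : μ (g ⁻¹' B) < μ B := (hμle B hB).lt_of_ne hne'
    have h2 : μ ((g ⁻¹' B)ᶜ) ≤ μ Bᶜ := by
      have := hμle Bᶜ hB.compl
      rwa [Set.preimage_compl] at this
    have e1 : μ (g ⁻¹' B) + μ ((g ⁻¹' B)ᶜ) = μ Set.univ :=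
      measure_add_measure_compl (hg.measurable hB)
    have e2 : μ B + μ Bᶜ = μ Set.univ := measure_add_measure_compl hB
    have hstrict : μ (g ⁻¹' B) + μ ((g ⁻¹' B)ᶜ) < μ B + μ Bᶜ :=
      ENNReal.add_lt_add_of_lt_of_le (measure_ne_top μ _) hlt h2
    rw [e1, e2] at hstrict
    exact lt_irrefl _ hstrict
  -- lower bound on `μ A`
  have hncard : ∀ n : ℕ, {k : ℕ | k < n ∧ g^[k] ξ ∈ A}.ncard
      = ((Finset.range n).filter (fun k => g^[k] ξ ∈ A)).card := by
    intro n
    rw [← Set.ncard_coe_finset]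
    congr 1
    ext k
    simp [Finset.mem_filter, Finset.mem_range, and_comm]
  have hνlam : ∀ f : Ξ →ᵇ ℝ≥0, (∀ x ∈ A, 1 ≤ f x) →
      ENNReal.ofReal ν ≤ lam0 g ξ 𝒰 f := by
    intro f hf1
    set q : ℕ → ℝ≥0 := fun n =>
      (((Finset.range n).filter (fun k => g^[k] ξ ∈ A)).card : ℝ≥0) / (n : ℝ≥0) with hqdef
    have hqF : ∀ n, (q n : ℝ) = F n := by
      intro n
      rw [hqdef]
      simp only [NNReal.coe_div, NNReal.coe_natCast]
      show ((((Finset.range n).filter (fun k => g^[k] ξ ∈ A)).card : ℝ)) / (n:ℝ)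
        = ({k : ℕ | k < n ∧ g^[k] ξ ∈ A}.ncard : ℝ) / (n:ℝ)
      rw [hncard n]
    have hq_le : ∀ n, q n ≤ birk g ξ f n := by
      intro n
      show (((Finset.range n).filter (fun k => g^[k] ξ ∈ A)).card : ℝ≥0) / (n : ℝ≥0)
        ≤ (∑ k ∈ Finset.range n, f (g^[k] ξ)) / (n : ℝ≥0)
      rw [div_eq_mul_inv, div_eq_mul_inv]
      refine mul_le_mul_left ?_ _
      calc (((Finset.range n).filter (fun k => g^[k] ξ ∈ A)).card : ℝ≥0)
          = ∑ _k ∈ (Finset.range n).filter (fun k => g^[k] ξ ∈ A), (1:ℝ≥0) := by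
            simp
        _ ≤ ∑ k ∈ (Finset.range n).filter (fun k => g^[k] ξ ∈ A), f (g^[k] ξ) :=
            Finset.sum_le_sum fun k hk => hf1 _ (Finset.mem_filter.1 hk).2
        _ ≤ ∑ k ∈ Finset.range n, f (g^[k] ξ) :=
            Finset.sum_le_sum_of_subset (Finset.filter_subset _ _)
    refine ENNReal.le_of_forall_pos_le_add fun ε hε _hfin => ?_
    have hεR : (0:ℝ) < (ε:ℝ) := hε
    have hev : ∀ᶠ n in (𝒰 : Filter ℕ),
        ENNReal.ofReal (ν - (ε:ℝ)) ≤ ((birk g ξ f n : ℝ≥0) : ℝ≥0∞) := by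
      refine Filter.Eventually.filter_mono h𝒰φ ?_
      rw [Filter.eventually_map]
      obtain ⟨J, hJ⟩ := exists_nat_gt (1/(ε:ℝ))
      filter_upwards [eventually_ge_atTop J] with j hj
      have hj1 : (1:ℝ)/(ε:ℝ) < (j:ℝ) + 1 := by
        refine hJ.trans_le ?_
        have : (J:ℝ) ≤ (j:ℝ) := by exact_mod_cast hj
        linarith
      have hinv : (1:ℝ)/((j:ℝ)+1) < (ε:ℝ) := by
        rw [div_lt_iff₀ (by positivity)]
        rw [div_lt_iff₀ hεR] at hj1
        nlinarith
      have h2 : ν - (ε:ℝ) < F (φ j) := by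
        have := hφ j
        linarith
      calc ENNReal.ofReal (ν - (ε:ℝ)) ≤ ENNReal.ofReal (F (φ j)) :=
            ENNReal.ofReal_le_ofReal h2.le
        _ = ((q (φ j) : ℝ≥0) : ℝ≥0∞) := by
            rw [← hqF (φ j), ENNReal.ofReal_coe_nnreal]
        _ ≤ ((birk g ξ f (φ j) : ℝ≥0) : ℝ≥0∞) := ENNReal.coe_le_coe.2 (hq_le (φ j))
    have hlb : ENNReal.ofReal (ν - (ε:ℝ)) ≤ lam0 g ξ 𝒰 f :=
      ge_of_tendsto (tendsto_lam0 g ξ 𝒰 f) hev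
    calc ENNReal.ofReal ν = ENNReal.ofReal ((ν - (ε:ℝ)) + (ε:ℝ)) := by ring_nf
      _ ≤ ENNReal.ofReal (ν - (ε:ℝ)) + ENNReal.ofReal (ε:ℝ) := ENNReal.ofReal_add_le
      _ ≤ lam0 g ξ 𝒰 f + (ε : ℝ≥0∞) := by
          refine add_le_add hlb ?_
          rw [ENNReal.ofReal_coe_nnreal]
  have hKA : IsCompact A := hA.isCompact
  set KA : Compacts Ξ := ⟨A, hKA⟩ with hKAdef
  have hCA : ENNReal.ofReal ν ≤ (C KA : ℝ≥0∞) := by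
    show ((ν.toNNReal : ℝ≥0) : ℝ≥0∞) ≤ ((rieszContentAux (Λ ∘ₗ toB) KA : ℝ≥0) : ℝ≥0∞)
    refine ENNReal.coe_le_coe.2 ?_
    refine le_csInf (rieszContentAux_image_nonempty (Λ ∘ₗ toB) KA) ?_
    rintro b ⟨f, hf, rfl⟩
    have h1 : ENNReal.ofReal ν ≤ lam0 g ξ 𝒰 f := hνlam (toB f) fun x hx => hf x hx
    have h2 : ENNReal.ofReal ν ≤ ((Λ (toB f) : ℝ≥0) : ℝ≥0∞) := by rw [hΛcoe (toB f)]; exact h1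
    exact ENNReal.coe_le_coe.1 h2
  have hμA : ENNReal.ofReal ν ≤ μ A := by
    calc ENNReal.ofReal ν ≤ (C KA : ℝ≥0∞) := hCA
      _ ≤ C.outerMeasure KA := C.le_outerMeasure_compacts KA
      _ = μ A := (C.measure_apply hA.measurableSet).symm
  exact absurd (hmeas μ hprob hμpres) (not_lt.2 hμA)
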